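/- Let Q, P, H ∈ ℝ^{d×d} be symmetric matrices with r > 0, such that H is not a scalar multiple of P, ⟨P, Q − r·H/‖H‖_F⟩ < 0, and ⟨P, Q⟩² < r²‖P‖_F². Define α := √((‖P‖_F²‖H‖_F² − ⟨P,H⟩²)/(r²‖P‖_F² − ⟨P,Q⟩²)) and β := (⟨P,H⟩ − α⟨P,Q⟩)/‖P‖_F². Then the minimum of ⟨X, H⟩ over the set {X symmetric : ‖X − Q‖_F ≤ r and ⟨P, X⟩ ≥ 0} is attained at X* = (βP − H)/α + Q and equals ⟨H, (βP − H)/α + Q⟩. (This is the third case of the analytical solution of the linearly-constrained sphere rule problem (P4).) -/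

import Mathlib

open scoped BigOperators
open scoped Matrix

noncomputable def frob {d : ℕ} (A B : Matrix (Fin d) (Fin d) ℝ) : ℝ :=
  Matrix.trace (Aᵀ * B)

noncomputable def frobNorm {d : ℕ} (A : Matrix (Fin d) (Fin d) ℝ) : ℝ :=
  Real.sqrt (frob A A)

variable {d : ℕ} (A B C : Matrix (Fin d) (Fin d) ℝ)

lemma frob_eq_sum : frob A B = ∑ i, ∑ j, A j i * B j i := by
  simp [frob, Matrix.trace, Matrix.mul_apply, Matrix.diag]

lemma frob_comm : frob A B = frob B A := by
  simp [frob_eq_sum, mul_comm]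

lemma frob_add_right : frob A (B + C) = frob A B + frob A C := by
  simp [frob, Matrix.mul_add]

lemma frob_add_left : frob (A + B) C = frob A C + frob B C := by
  simp [frob, Matrix.transpose_add, Matrix.add_mul]

lemma frob_sub_right : frob A (B - C) = frob A B - frob A C := by
  simp [frob, Matrix.mul_sub]

lemma frob_sub_left : frob (A - B) C = frob A C - frob B C := by
  simp [frob, Matrix.transpose_sub, Matrix.sub_mul]

lemma frob_smul_right (t : ℝ) : frob A (t • B) = t * frob A B := by
  simp [frob, Matrix.mul_smul]

lemma frob_smul_left (t : ℝ) : frob (t • A) B = t * frob A B := by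
  simp [frob, Matrix.transpose_smul, Matrix.smul_mul]

lemma frob_self_nonneg : 0 ≤ frob A A := by
  rw [frob_eq_sum]
  exact Finset.sum_nonneg fun i _ => Finset.sum_nonneg fun j _ => mul_self_nonneg _

lemma frob_self_pos (h : A ≠ 0) : 0 < frob A A := by
  rcases lt_or_eq_of_le (frob_self_nonneg A) with h' | h'
  · exact h'
  exfalso; apply h
  ext j i
  have h0 : ∀ i ∈ (Finset.univ : Finset (Fin d)), ∀ j ∈ (Finset.univ : Finset (Fin d)), A j i * A j i = 0 := by
    intro i _
    have := (Finset.sum_eq_zero_iff_of_nonneg (fun i _ => Finset.sum_nonneg fun j _ => mul_self_nonneg (A j i))).1 ((frob_eq_sum A A).symm.trans h'.symm) i (Finset.mem_univ i)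
    intro j hj
    exact (Finset.sum_eq_zero_iff_of_nonneg (fun j _ => mul_self_nonneg (A j i))).1 this j hj
  have := h0 i (Finset.mem_univ i) j (Finset.mem_univ j)
  simpa [mul_self_eq_zero] using this

lemma frobNorm_nonneg : 0 ≤ frobNorm A := Real.sqrt_nonneg _

lemma frobNorm_sq : frobNorm A ^ 2 = frob A A := Real.sq_sqrt (frob_self_nonneg A)

lemma frob_sq_le : frob A B ^ 2 ≤ frob A A * frob B B := by
  rcases eq_or_ne B 0 with rfl | hB
  · simp [frob]
  have hb : 0 < frob B B := frob_self_pos B hB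
  have h0 : 0 ≤ frob (A - (frob A B / frob B B) • B) (A - (frob A B / frob B B) • B) :=
    frob_self_nonneg _
  simp only [frob_sub_left, frob_sub_right, frob_smul_left, frob_smul_right] at h0
  rw [frob_comm B A] at h0
  have hb' : frob B B ≠ 0 := ne_of_gt hb
  field_simp at h0
  nlinarith [h0]

lemma frob_le : frob A B ≤ frobNorm A * frobNorm B := by
  have h1 := frob_sq_le A B
  have h2 := frobNorm_sq A
  have h3 := frobNorm_sq B
  have h4 := frobNorm_nonneg A
  have h5 := frobNorm_nonneg B
  nlinarith [h1, mul_nonneg h4 h5]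


set_option maxHeartbeats 1000000 in
/-- Third case of the analytical solution of (P4): the linearly constrained sphere
minimizer when the linear constraint is active. -/
theorem sphere_linear_rule_case3 {d : ℕ} (Q P H : Matrix (Fin d) (Fin d) ℝ)
    (hQ : Q.IsSymm) (hP : P.IsSymm) (hH : H.IsSymm)
    (r : ℝ) (hr : 0 < r)
    (hnotmul : ¬ ∃ a : ℝ, H = a • P)
    (hcase : frob P (Q - (r / frobNorm H) • H) < 0)
    (hden : frob P Q ^ 2 < r ^ 2 * frobNorm P ^ 2) :
    let α := Real.sqrt ((frobNorm P ^ 2 * frobNorm H ^ 2 - frob P H ^ 2) /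
      (r ^ 2 * frobNorm P ^ 2 - frob P Q ^ 2))
    let β := (frob P H - α * frob P Q) / frobNorm P ^ 2
    let Xstar := (1 / α) • (β • P - H) + Q
    (Xstar.IsSymm ∧ frobNorm (Xstar - Q) ≤ r ∧ 0 ≤ frob P Xstar) ∧
    (∀ X : Matrix (Fin d) (Fin d) ℝ, X.IsSymm → frobNorm (X - Q) ≤ r → 0 ≤ frob P X →
      frob Xstar H ≤ frob X H) ∧
    frob Xstar H = frob H ((1 / α) • (β • P - H) + Q) := by
  intro α β Xstar
  have hXstar : Xstar = (1 / α) • (β • P - H) + Q := rfl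
  have hαdef0 : α = Real.sqrt ((frobNorm P ^ 2 * frobNorm H ^ 2 - frob P H ^ 2) /
      (r ^ 2 * frobNorm P ^ 2 - frob P Q ^ 2)) := rfl
  have hβdef0 : β = (frob P H - α * frob P Q) / frobNorm P ^ 2 := rfl
  clear_value Xstar β α
  set p := frob P P with hpdef
  set h := frob H H with hhdef
  set q := frob P Q with hqdef
  set c := frob P H with hcdef
  clear_value p h q c
  have hHne : H ≠ 0 := by
    rintro rfl
    exact hnotmul ⟨0, by simp⟩
  have hh : 0 < h := by rw [hhdef]; exact frob_self_pos H hHne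
  have hfp : frobNorm P ^ 2 = p := by rw [hpdef]; exact frobNorm_sq P
  have hfh : frobNorm H ^ 2 = h := by rw [hhdef]; exact frobNorm_sq H
  rw [hfp, hfh] at hαdef0
  rw [hfp] at hβdef0 hden
  have hp : 0 < p := by
    have hrp : 0 < r ^ 2 * p := lt_of_le_of_lt (sq_nonneg q) hden
    by_contra hcon
    push_neg at hcon
    have : r ^ 2 * p ≤ 0 := mul_nonpos_of_nonneg_of_nonpos (sq_nonneg r) hcon
    linarith
  have hp' : p ≠ 0 := ne_of_gt hp
  have hdenp : 0 < r ^ 2 * p - q ^ 2 := by linarith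
  have hdenp' : r ^ 2 * p - q ^ 2 ≠ 0 := ne_of_gt hdenp
  -- strict Cauchy-Schwarz for P, H
  have hstrict : c ^ 2 < p * h := by
    have hGne : p • H - c • P ≠ 0 := by
      intro h0
      apply hnotmul
      refine ⟨c / p, ?_⟩
      have h1 : p • H = c • P := sub_eq_zero.mp h0
      have h2 := congrArg (fun M : Matrix (Fin d) (Fin d) ℝ => p⁻¹ • M) h1
      simpa [smul_smul, inv_mul_cancel₀ hp', div_eq_inv_mul] using h2
    have hG := frob_self_pos _ hGne
    simp only [frob_sub_left, frob_sub_right, frob_smul_left, frob_smul_right,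
      frob_comm H P] at hG
    rw [← hcdef, ← hpdef, ← hhdef] at hG
    have h9 : 0 < p * (p * h - c ^ 2) := by linarith [hG]
    by_contra hcon
    push_neg at hcon
    have : p * (p * h - c ^ 2) ≤ 0 :=
      mul_nonpos_of_nonneg_of_nonpos hp.le (by linarith)
    linarith
  -- s = frobNorm H
  set s := frobNorm H with hsdef
  clear_value s
  have hs : 0 < s := by
    rw [hsdef]
    exact Real.sqrt_pos.mpr (frob_self_pos H hHne)
  have hs2 : s ^ 2 = h := hfh
  have hqs : q * s < r * c := by
    rw [frob_sub_right, frob_smul_right, ← hcdef, ← hqdef, div_mul_eq_mul_div,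
      sub_lt_zero, lt_div_iff₀ hs] at hcase
    linarith [hcase]
  -- α facts
  have hratio : 0 < (p * h - c ^ 2) / (r ^ 2 * p - q ^ 2) :=
    div_pos (by linarith) hdenp
  have hα : 0 < α := hαdef0 ▸ Real.sqrt_pos.mpr hratio
  have hα' : α ≠ 0 := ne_of_gt hα
  have hα2 : α ^ 2 * (r ^ 2 * p - q ^ 2) = p * h - c ^ 2 := by
    rw [hαdef0, Real.sq_sqrt hratio.le]
    exact div_mul_cancel₀ _ hdenp'
  -- β facts
  have hq2h : q ^ 2 * s ^ 2 = q ^ 2 * h := by rw [hs2]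
  have hkey : (c ^ 2 - α ^ 2 * q ^ 2) * (r ^ 2 * p - q ^ 2) = p * (r ^ 2 * c ^ 2 - q ^ 2 * h) := by
    linear_combination (-q ^ 2) * hα2
  have hcαq : 0 < c - α * q := by
    rcases le_or_gt q 0 with hq | hq
    · rcases lt_or_ge 0 c with hc | hc
      · have h0 : α * q ≤ 0 := mul_nonpos_of_nonneg_of_nonpos hα.le hq
        linarith
      · have h1 : r * c ≤ 0 := mul_nonpos_of_nonneg_of_nonpos hr.le hc
        have hq' : q < 0 := by
          by_contra hcon
          push_neg at hcon
          linarith [mul_nonneg hcon hs.le]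
        have h2 : q * s < 0 := by linarith
        have h3 : 0 < (r * c - q * s) * (-(r * c + q * s)) :=
          mul_pos (by linarith) (by linarith)
        have h3' : (r * c - q * s) * (-(r * c + q * s)) = q ^ 2 * s ^ 2 - r ^ 2 * c ^ 2 := by
          ring
        have hrc2 : r ^ 2 * c ^ 2 < q ^ 2 * h := by linarith [hq2h, h3, h3']
        have h5 : (c ^ 2 - α ^ 2 * q ^ 2) * (r ^ 2 * p - q ^ 2) < 0 := by
          rw [hkey]
          exact mul_neg_of_pos_of_neg hp (by linarith)
        have hc2 : c ^ 2 < α ^ 2 * q ^ 2 := by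
          by_contra hcon
          push_neg at hcon
          have h6 : 0 ≤ (c ^ 2 - α ^ 2 * q ^ 2) * (r ^ 2 * p - q ^ 2) :=
            mul_nonneg (by linarith) hdenp.le
          linarith
        by_contra hcon
        push_neg at hcon
        have haq : α * q < 0 := mul_neg_of_pos_of_neg hα hq'
        have h7 := mul_self_le_mul_self (show (0:ℝ) ≤ -(α * q) by linarith)
          (show -(α * q) ≤ -c by linarith)
        linarith [h7, hc2]
    · have hqs0 : 0 < q * s := mul_pos hq hs
      have hc : 0 < c := by
        by_contra hcon
        push_neg at hcon
        linarith [mul_nonpos_of_nonneg_of_nonpos hr.le hcon]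
      have h3 : 0 < (r * c - q * s) * (r * c + q * s) :=
        mul_pos (by linarith) (by linarith)
      have h3' : (r * c - q * s) * (r * c + q * s) = r ^ 2 * c ^ 2 - q ^ 2 * s ^ 2 := by
        ring
      have hrc2 : q ^ 2 * h < r ^ 2 * c ^ 2 := by linarith [hq2h, h3, h3']
      have h5 : 0 < (c ^ 2 - α ^ 2 * q ^ 2) * (r ^ 2 * p - q ^ 2) := by
        rw [hkey]
        exact mul_pos hp (by linarith)
      have hc2 : α ^ 2 * q ^ 2 < c ^ 2 := by
        by_contra hcon
        push_neg at hcon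
        have h6 : (c ^ 2 - α ^ 2 * q ^ 2) * (r ^ 2 * p - q ^ 2) ≤ 0 :=
          mul_nonpos_of_nonpos_of_nonneg (by linarith) hdenp.le
        linarith
      by_contra hcon
      push_neg at hcon
      have h7 := mul_self_le_mul_self hc.le (show c ≤ α * q by linarith)
      linarith [h7, hc2]
  have hβ : β * p = c - α * q := by
    rw [hβdef0]; field_simp
  have hβpos : 0 < β := by
    rw [hβdef0]; exact div_pos hcαq hp
  -- D = Xstar - Q
  have hD : Xstar - Q = (1 / α) • (β • P - H) := by rw [hXstar, add_sub_cancel_right]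
  -- frob P Xstar = 0
  have hPXstar : frob P Xstar = 0 := by
    rw [hXstar, frob_add_right, frob_smul_right, frob_sub_right, frob_smul_right,
      ← hpdef, ← hcdef, ← hqdef, hβ]
    field_simp
    ring
  -- frob D D = r^2
  have hE : frob (β • P - H) (β • P - H) = α ^ 2 * r ^ 2 := by
    simp only [frob_sub_left, frob_sub_right, frob_smul_left, frob_smul_right,
      frob_comm H P]
    rw [← hpdef, ← hcdef, ← hhdef, hβdef0]
    field_simp
    linear_combination (-1) * hα2
  have hDD : frob ((1 / α) • (β • P - H)) ((1 / α) • (β • P - H)) = r ^ 2 := by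
    rw [frob_smul_left, frob_smul_right, hE]
    field_simp
  have hDnorm : frobNorm (Xstar - Q) = r := by
    rw [hD]
    show Real.sqrt _ = r
    rw [hDD, Real.sqrt_sq hr.le]
  refine ⟨⟨?_, le_of_eq hDnorm, le_of_eq hPXstar.symm⟩, ?_, ?_⟩
  case refine_3 => rw [hXstar]; exact frob_comm _ _
  · rw [hXstar]
    exact (((hP.smul β).sub hH).smul (1 / α)).add hQ
  · intro X hXsym hXball hXpos
    have hH' : H = β • P - α • ((1 / α) • (β • P - H)) := by
      rw [smul_smul, mul_one_div, div_self hα', one_smul, sub_sub_cancel]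
    have expand : ∀ M : Matrix (Fin d) (Fin d) ℝ,
        frob M H = β * frob M P - α * frob M ((1 / α) • (β • P - H)) := by
      intro M
      conv_lhs => rw [hH']
      rw [frob_sub_right, frob_smul_right, frob_smul_right]
    have hXs : frob Xstar ((1 / α) • (β • P - H)) =
        r ^ 2 + frob Q ((1 / α) • (β • P - H)) := by
      rw [hXstar, frob_add_left, frob_comm ((1 / α) • (β • P - H)), hDD]
    have hX : frob X ((1 / α) • (β • P - H)) =
        frob (X - Q) ((1 / α) • (β • P - H)) + frob Q ((1 / α) • (β • P - H)) := by
      rw [← frob_add_left, sub_add_cancel]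
    have hCS : frob (X - Q) ((1 / α) • (β • P - H)) ≤ r * r := by
      have h1 := frob_le (X - Q) ((1 / α) • (β • P - H))
      have h2 : frobNorm ((1 / α) • (β • P - H)) = r := by rw [← hD]; exact hDnorm
      rw [h2] at h1
      calc frob (X - Q) ((1 / α) • (β • P - H)) ≤ frobNorm (X - Q) * r := h1
        _ ≤ r * r := mul_le_mul_of_nonneg_right hXball hr.le
    have e1 := expand X
    have e2 := expand Xstar
    have hPXstar' : β * frob Xstar P = 0 := by
      rw [(frob_comm Xstar P).trans hPXstar, mul_zero]
    have hXP : 0 ≤ frob X P := (frob_comm P X) ▸ hXpos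
    have t1 : 0 ≤ β * frob X P := mul_nonneg hβpos.le hXP
    have t2' : α * frob (X - Q) ((1 / α) • (β • P - H)) ≤ α * r ^ 2 := by
      have := mul_le_mul_of_nonneg_left hCS hα.le
      linarith [this]
    have hXα : α * frob X ((1 / α) • (β • P - H)) =
        α * frob (X - Q) ((1 / α) • (β • P - H)) + α * frob Q ((1 / α) • (β • P - H)) := by
      rw [hX]; ring
    have hXsα : α * frob Xstar ((1 / α) • (β • P - H)) =
        α * r ^ 2 + α * frob Q ((1 / α) • (β • P - H)) := by
      rw [hXs]; ring
    linarith [e1, e2, hPXstar', t1, hXα, hXsα, t2']
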